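/- Let X be a compact metric space, G a group of homeomorphisms of X, and H a normal subgroup of G. Then the set of cosets {closure(fH) : f ∈ closure(G)} with multiplication closure(fH) * closure(pH) = closure((f∘p)H) is a monoid with identity closure(H), and multiplication is continuous with respect to the Hausdorff metric. -/

import Mathlib

open EMetric Metric Set
open scoped ENNReal NNReal

namespace Stmt9Aux

variable {X : Type*} [MetricSpace X] [CompactSpace X]

/-- `mm H f` is the closure of the coset `f ∘ H` inside `C(X,X)`. -/
def mm (H : Set (X ≃ₜ X)) (f : C(X, X)) : Set C(X, X) :=
  closure {q : C(X, X) | ∃ h ∈ H, q = f.comp (h : C(X, X))}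

variable {H : Set (X ≃ₜ X)}

theorem hd_mm_le {a b : C(X, X)} {r : ℝ}
    (hab : ∀ h : X ≃ₜ X, h ∈ H →
      edist (a.comp (h : C(X, X))) (b.comp (h : C(X, X))) ≤ ENNReal.ofReal r) :
    hausdorffEdist (mm H a) (mm H b) ≤ ENNReal.ofReal r := by
  rw [mm, mm]
  unfold hausdorffEdist
  rw [hausdorffEDist_closure]
  apply hausdorffEdist_le_of_mem_edist
  · rintro q ⟨h, hh, rfl⟩
    exact ⟨b.comp h, ⟨h, hh, rfl⟩, hab h hh⟩
  · rintro q ⟨h, hh, rfl⟩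
    exact ⟨a.comp h, ⟨h, hh, rfl⟩, by rw [edist_comm]; exact hab h hh⟩

theorem edist_comp_right_le (a b p : C(X, X)) :
    edist (a.comp p) (b.comp p) ≤ edist a b := by
  rw [edist_dist, edist_dist]
  apply ENNReal.ofReal_le_ofReal
  rw [ContinuousMap.dist_le dist_nonneg]
  intro x
  simp only [ContinuousMap.comp_apply]
  exact ContinuousMap.dist_apply_le_dist _

theorem hd_mm_le_edist (a b : C(X, X)) :
    hausdorffEdist (mm H a) (mm H b) ≤ edist a b := by
  rw [edist_dist]
  exact hd_mm_le fun h hh => by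
    rw [← edist_dist]; exact edist_comp_right_le a b _

theorem hd_mm_ne_top (a b : C(X, X)) :
    hausdorffEdist (mm H a) (mm H b) ≠ ⊤ :=
  ((hd_mm_le_edist a b).trans_lt (edist_lt_top a b)).ne

theorem mm_comp_left (f p : C(X, X)) :
    mm H (f.comp p) = closure ((fun q => f.comp q) '' mm H p) := by
  rw [mm, mm, closure_image_closure (ContinuousMap.continuous_postcomp f)]
  refine congrArg closure ?_
  ext q
  constructor
  · rintro ⟨h, hh, rfl⟩
    exact ⟨p.comp h, ⟨h, hh, rfl⟩, (ContinuousMap.comp_assoc f p (h : C(X,X))).symm⟩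
  · rintro ⟨r, ⟨h, hh, rfl⟩, rfl⟩
    exact ⟨h, hh, (ContinuousMap.comp_assoc f p (h : C(X,X))).symm⟩

theorem hd_mm_comp_left {f p p' : C(X, X)} {δ η : ℝ} (hη : 0 ≤ η)
    (hmod : ∀ u v : X, dist u v < δ → dist (f u) (f v) ≤ η)
    (hpp : hausdorffEdist (mm H p') (mm H p) < ENNReal.ofReal δ) :
    hausdorffEdist (mm H (f.comp p')) (mm H (f.comp p)) ≤ ENNReal.ofReal η := by
  unfold hausdorffEdist at hpp ⊢
  rw [mm_comp_left, mm_comp_left, hausdorffEDist_closure]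
  have key : ∀ a b : C(X, X), edist a b < ENNReal.ofReal δ →
      edist (f.comp a) (f.comp b) ≤ ENNReal.ofReal η := by
    intro a b hab
    rw [edist_lt_ofReal] at hab
    rw [edist_le_ofReal hη, ContinuousMap.dist_le hη]
    intro x
    simp only [ContinuousMap.comp_apply]
    exact hmod _ _ (lt_of_le_of_lt (ContinuousMap.dist_apply_le_dist x) hab)
  apply hausdorffEdist_le_of_mem_edist
  · rintro q ⟨a, ha, rfl⟩
    obtain ⟨b, hb, hd⟩ := exists_edist_lt_of_hausdorffEdist_lt ha hpp
    exact ⟨f.comp b, mem_image_of_mem _ hb, key a b hd⟩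
  · rintro q ⟨a, ha, rfl⟩
    rw [hausdorffEDist_comm] at hpp
    obtain ⟨b, hb, hd⟩ := exists_edist_lt_of_hausdorffEdist_lt ha hpp
    exact ⟨f.comp b, mem_image_of_mem _ hb, key a b hd⟩

variable {G : Set (X ≃ₜ X)}

theorem mm_comp_right (hG3 : ∀ f ∈ G, f.symm ∈ G)
    (hnorm : ∀ g ∈ G, ∀ h ∈ H, (g.symm.trans h).trans g ∈ H)
    (f : C(X, X)) {g : X ≃ₜ X} (hg : g ∈ G) :
    mm H (f.comp (g : C(X, X))) = closure ((fun q => q.comp (g : C(X, X))) '' mm H f) := by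
  rw [mm, mm, closure_image_closure (ContinuousMap.continuous_precomp _)]
  refine congrArg closure ?_
  ext q
  constructor
  · rintro ⟨h, hh, rfl⟩
    refine ⟨f.comp (((g.symm.trans h).trans g : X ≃ₜ X) : C(X, X)),
      ⟨(g.symm.trans h).trans g, hnorm g hg h hh, rfl⟩, ?_⟩
    ext x
    simp [ContinuousMap.comp_apply]
  · rintro ⟨r, ⟨h, hh, rfl⟩, rfl⟩
    refine ⟨(g.symm.symm.trans h).trans g.symm, hnorm g.symm (hG3 g hg) h hh, ?_⟩
    ext x
    simp [ContinuousMap.comp_apply]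

theorem hd_right_G (hG3 : ∀ f ∈ G, f.symm ∈ G)
    (hnorm : ∀ g ∈ G, ∀ h ∈ H, (g.symm.trans h).trans g ∈ H)
    (f f' : C(X, X)) {g : X ≃ₜ X} (hg : g ∈ G) :
    hausdorffEdist (mm H (f.comp (g : C(X, X)))) (mm H (f'.comp (g : C(X, X)))) ≤
      hausdorffEdist (mm H f) (mm H f') := by
  apply ENNReal.le_of_forall_pos_le_add
  intro ε hε hfin
  have hlt : hausdorffEdist (mm H f) (mm H f') <
      hausdorffEdist (mm H f) (mm H f') + ε :=
    ENNReal.lt_add_right hfin.ne (by exact_mod_cast hε.ne')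
  unfold hausdorffEdist at hlt ⊢
  rw [mm_comp_right hG3 hnorm f hg, mm_comp_right hG3 hnorm f' hg, hausdorffEDist_closure]
  apply hausdorffEdist_le_of_mem_edist
  · rintro q ⟨a, ha, rfl⟩
    obtain ⟨b, hb, hd⟩ := exists_edist_lt_of_hausdorffEdist_lt ha hlt
    exact ⟨b.comp _, mem_image_of_mem _ hb, (edist_comp_right_le a b _).trans hd.le⟩
  · rintro q ⟨a, ha, rfl⟩
    have hlt2 : hausdorffEdist (mm H f') (mm H f) <
        hausdorffEdist (mm H f) (mm H f') + ε := by
      unfold hausdorffEdist; rw [hausdorffEDist_comm]; exact hlt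
    obtain ⟨b, hb, hd⟩ := exists_edist_lt_of_hausdorffEdist_lt ha hlt2
    exact ⟨b.comp _, mem_image_of_mem _ hb, (edist_comp_right_le a b _).trans hd.le⟩

theorem hd_right_Gbar (hG3 : ∀ f ∈ G, f.symm ∈ G)
    (hnorm : ∀ g ∈ G, ∀ h ∈ H, (g.symm.trans h).trans g ∈ H)
    (f f' : C(X, X)) {p : C(X, X)}
    (hp : p ∈ closure {q : C(X, X) | ∃ g ∈ G, q = (g : C(X, X))}) :
    hausdorffEdist (mm H (f.comp p)) (mm H (f'.comp p)) ≤
      hausdorffEdist (mm H f) (mm H f') := by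
  apply ENNReal.le_of_forall_pos_le_add
  intro ε hε _
  set η : ℝ := (ε : ℝ) / 2 with hηdef
  have hη : 0 < η := by positivity
  obtain ⟨δ₁, hδ₁, hmf⟩ := Metric.uniformContinuous_iff.mp
    (CompactSpace.uniformContinuous_of_continuous f.continuous) η hη
  obtain ⟨δ₂, hδ₂, hmf'⟩ := Metric.uniformContinuous_iff.mp
    (CompactSpace.uniformContinuous_of_continuous f'.continuous) η hη
  obtain ⟨b, ⟨g, hg, rfl⟩, hgp⟩ := Metric.mem_closure_iff.mp hp (min δ₁ δ₂) (lt_min hδ₁ hδ₂)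
  have key : ∀ (a : C(X, X)), (∀ u v : X, dist u v < min δ₁ δ₂ → dist (a u) (a v) < η) →
      hausdorffEdist (mm H (a.comp p)) (mm H (a.comp (g : C(X, X)))) ≤ ENNReal.ofReal η := by
    intro a hmod
    apply hd_mm_le
    intro h hh
    rw [ContinuousMap.comp_assoc, ContinuousMap.comp_assoc, edist_le_ofReal hη.le,
      ContinuousMap.dist_le hη.le]
    intro x
    simp only [ContinuousMap.comp_apply]
    refine (hmod _ _ ?_).le
    exact lt_of_le_of_lt (ContinuousMap.dist_apply_le_dist _) hgp
  have h1 := key f fun u v huv => hmf (huv.trans_le (min_le_left _ _))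
  have h2 := key f' fun u v huv => hmf' (huv.trans_le (min_le_right _ _))
  calc hausdorffEdist (mm H (f.comp p)) (mm H (f'.comp p)) ≤
      hausdorffEdist (mm H (f.comp p)) (mm H (f.comp (g : C(X, X)))) +
        (hausdorffEdist (mm H (f.comp (g : C(X, X)))) (mm H (f'.comp (g : C(X, X)))) +
          hausdorffEdist (mm H (f'.comp (g : C(X, X)))) (mm H (f'.comp p))) := by
        rw [← add_assoc]
        exact le_trans (hausdorffEdist_triangle) (add_le_add hausdorffEdist_triangle le_rfl)
    _ ≤ ENNReal.ofReal η + (hausdorffEdist (mm H f) (mm H f') + ENNReal.ofReal η) := by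
        refine add_le_add h1 (add_le_add (hd_right_G hG3 hnorm f f' hg) ?_)
        unfold hausdorffEdist; rw [hausdorffEDist_comm]; exact h2
    _ = hausdorffEdist (mm H f) (mm H f') + ↑ε := by
        have : (ε : ℝ≥0∞) = ENNReal.ofReal η + ENNReal.ofReal η := by
          rw [← ENNReal.ofReal_add hη.le hη.le, hηdef, add_halves]
          exact ENNReal.ofReal_coe_nnreal.symm
        rw [this]; ring

end Stmt9Aux

open EMetric in
/-- Let `X` be a compact metric space, `G` a group of homeomorphisms of
`X` and `H ⊴ G`.  On the set of cosets `{closure(fH) : f ∈ closure(G)}` the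
multiplication `closure(fH) * closure(pH) = closure((f∘p)H)` is well defined,
associative, has identity `closure(H)` (so these cosets form a monoid), and it is
continuous with respect to the Hausdorff metric. -/
theorem stmt9 {X : Type*} [MetricSpace X] [CompactSpace X]
    (G H : Set (X ≃ₜ X))
    (hG1 : Homeomorph.refl X ∈ G) (hG2 : ∀ f ∈ G, ∀ g ∈ G, f.trans g ∈ G)
    (hG3 : ∀ f ∈ G, f.symm ∈ G) (hHG : H ⊆ G)
    (hH1 : Homeomorph.refl X ∈ H) (hH2 : ∀ f ∈ H, ∀ g ∈ H, f.trans g ∈ H)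
    (hH3 : ∀ f ∈ H, f.symm ∈ H)
    (hnorm : ∀ g ∈ G, ∀ h ∈ H, (g.symm.trans h).trans g ∈ H) :
    -- notation: `m f = closure (fH)`, `Gbar = closure (G)` inside `C(X,X)`
    let m : C(X, X) → Set C(X, X) :=
      fun f => closure {q : C(X, X) | ∃ h ∈ H, q = f.comp (h : C(X, X))}
    let Gbar : Set C(X, X) := closure {q : C(X, X) | ∃ g ∈ G, q = (g : C(X, X))}
    -- the product is well defined on cosets
    (∀ f ∈ Gbar, ∀ f' ∈ Gbar, ∀ p ∈ Gbar, ∀ p' ∈ Gbar,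
      m f = m f' → m p = m p' → m (f.comp p) = m (f'.comp p')) ∧
    -- the product of two cosets is again a coset (closure of `G` is closed
    -- under composition)
    (∀ f ∈ Gbar, ∀ p ∈ Gbar, f.comp p ∈ Gbar) ∧
    -- associativity
    (∀ f ∈ Gbar, ∀ p ∈ Gbar, ∀ q ∈ Gbar,
      m ((f.comp p).comp q) = m (f.comp (p.comp q))) ∧
    -- `closure(H) = m id` is a two-sided identity
    ((ContinuousMap.id X) ∈ Gbar ∧
      ∀ f ∈ Gbar, m (f.comp (ContinuousMap.id X)) = m f ∧
        m ((ContinuousMap.id X).comp f) = m f) ∧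
    -- multiplication is continuous for the Hausdorff metric
    (∀ f ∈ Gbar, ∀ p ∈ Gbar, ∀ ε : ℝ, 0 < ε → ∃ δ : ℝ, 0 < δ ∧
      ∀ f' ∈ Gbar, ∀ p' ∈ Gbar,
        hausdorffEdist (m f') (m f) < ENNReal.ofReal δ →
        hausdorffEdist (m p') (m p) < ENNReal.ofReal δ →
        hausdorffEdist (m (f'.comp p')) (m (f.comp p)) < ENNReal.ofReal ε) := by
  intro m Gbar
  refine ⟨?_, ?_, ?_, ⟨?_, ?_⟩, ?_⟩
  · -- well definedness
    intro f _ f' _ p _ p' hp' hmf hmp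
    have hmf' : Stmt9Aux.mm H f = Stmt9Aux.mm H f' := hmf
    have hmp' : Stmt9Aux.mm H p = Stmt9Aux.mm H p' := hmp
    have hp'' : p' ∈ closure {q : C(X, X) | ∃ g ∈ G, q = (g : C(X, X))} := hp'
    have e1 : Stmt9Aux.mm H (f.comp p) = Stmt9Aux.mm H (f.comp p') := by
      rw [Stmt9Aux.mm_comp_left, Stmt9Aux.mm_comp_left, hmp']
    have e2 : Stmt9Aux.mm H (f.comp p') = Stmt9Aux.mm H (f'.comp p') := by
      refine (EMetric.hausdorffEdist_zero_iff_eq_of_closed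
        (isClosed_closure) (isClosed_closure)).mp (le_antisymm ?_ (zero_le))
      calc hausdorffEdist (Stmt9Aux.mm H (f.comp p')) (Stmt9Aux.mm H (f'.comp p'))
          ≤ hausdorffEdist (Stmt9Aux.mm H f) (Stmt9Aux.mm H f') :=
            Stmt9Aux.hd_right_Gbar hG3 hnorm f f' hp''
        _ = 0 := by rw [hmf']; exact hausdorffEDist_self
    exact e1.trans e2
  · -- closure of G is closed under composition
    intro f hf p hp
    have hf' : f ∈ closure {q : C(X, X) | ∃ g ∈ G, q = (g : C(X, X))} := hf
    have hp' : p ∈ closure {q : C(X, X) | ∃ g ∈ G, q = (g : C(X, X))} := hp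
    show f.comp p ∈ closure {q : C(X, X) | ∃ g ∈ G, q = (g : C(X, X))}
    rw [Metric.mem_closure_iff]
    intro ε hε
    obtain ⟨δ, hδ, hmod⟩ := Metric.uniformContinuous_iff.mp
      (CompactSpace.uniformContinuous_of_continuous f.continuous) (ε / 2) (by positivity)
    obtain ⟨b₂, ⟨g₂, hg₂, rfl⟩, hd₂⟩ := Metric.mem_closure_iff.mp hp' δ hδ
    obtain ⟨b₁, ⟨g₁, hg₁, rfl⟩, hd₁⟩ := Metric.mem_closure_iff.mp hf' (ε / 2) (by positivity)
    refine ⟨(g₂.trans g₁ : C(X, X)), ⟨g₂.trans g₁, hG2 g₂ hg₂ g₁ hg₁, rfl⟩, ?_⟩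
    have key1 : dist (f.comp p) (f.comp (g₂ : C(X, X))) ≤ ε / 2 := by
      rw [ContinuousMap.dist_le (by positivity)]
      intro x
      simp only [ContinuousMap.comp_apply]
      exact (hmod (lt_of_le_of_lt (ContinuousMap.dist_apply_le_dist x) hd₂)).le
    have key2 : dist (f.comp (g₂ : C(X, X))) ((g₂.trans g₁ : X ≃ₜ X) : C(X, X)) ≤
        dist f (g₁ : C(X, X)) := by
      rw [ContinuousMap.dist_le dist_nonneg]
      intro x
      show dist (f ((g₂ : C(X, X)) x)) ((g₁ : C(X, X)) ((g₂ : C(X, X)) x)) ≤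
        dist f (g₁ : C(X, X))
      exact ContinuousMap.dist_apply_le_dist _
    calc dist (f.comp p) ((g₂.trans g₁ : X ≃ₜ X) : C(X, X))
        ≤ dist (f.comp p) (f.comp (g₂ : C(X, X))) +
            dist (f.comp (g₂ : C(X, X))) ((g₂.trans g₁ : X ≃ₜ X) : C(X, X)) :=
          dist_triangle _ _ _
      _ < ε := by
          have := key2.trans_lt hd₁
          linarith
  · -- associativity
    intro f _ p _ q _
    exact congrArg m (ContinuousMap.comp_assoc f p q)
  · -- identity belongs to Gbar
    exact subset_closure ⟨Homeomorph.refl X, hG1, by ext x; rfl⟩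
  · -- identity laws
    intro f _
    exact ⟨congrArg m (ContinuousMap.comp_id f), congrArg m (ContinuousMap.id_comp f)⟩
  · -- continuity of multiplication
    intro f _ p _ ε hε
    obtain ⟨δ₁, hδ₁, hmod⟩ := Metric.uniformContinuous_iff.mp
      (CompactSpace.uniformContinuous_of_continuous f.continuous) (ε / 4) (by positivity)
    refine ⟨min δ₁ (ε / 2), by positivity, ?_⟩
    intro f' _ p' hp' h1 h2
    have hp'' : p' ∈ closure {q : C(X, X) | ∃ g ∈ G, q = (g : C(X, X))} := hp'
    have h1' : hausdorffEdist (Stmt9Aux.mm H f') (Stmt9Aux.mm H f) <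
        ENNReal.ofReal (min δ₁ (ε / 2)) := h1
    have h2' : hausdorffEdist (Stmt9Aux.mm H p') (Stmt9Aux.mm H p) <
        ENNReal.ofReal (min δ₁ (ε / 2)) := h2
    have A : hausdorffEdist (Stmt9Aux.mm H (f'.comp p')) (Stmt9Aux.mm H (f.comp p')) ≤
        ENNReal.ofReal (ε / 2) :=
      le_trans (le_of_lt (lt_of_le_of_lt (Stmt9Aux.hd_right_Gbar hG3 hnorm f' f hp'') h1'))
        (ENNReal.ofReal_le_ofReal (min_le_right δ₁ (ε / 2)))
    have B : hausdorffEdist (Stmt9Aux.mm H (f.comp p')) (Stmt9Aux.mm H (f.comp p)) ≤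
        ENNReal.ofReal (ε / 4) :=
      Stmt9Aux.hd_mm_comp_left (by positivity)
        (fun u v huv => (hmod (huv.trans_le (min_le_left _ _))).le) h2'
    have final : hausdorffEdist (Stmt9Aux.mm H (f'.comp p')) (Stmt9Aux.mm H (f.comp p)) <
        ENNReal.ofReal ε := by
      calc hausdorffEdist (Stmt9Aux.mm H (f'.comp p')) (Stmt9Aux.mm H (f.comp p))
          ≤ hausdorffEdist (Stmt9Aux.mm H (f'.comp p')) (Stmt9Aux.mm H (f.comp p')) +
              hausdorffEdist (Stmt9Aux.mm H (f.comp p')) (Stmt9Aux.mm H (f.comp p)) :=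
            hausdorffEdist_triangle
        _ ≤ ENNReal.ofReal (ε / 2) + ENNReal.ofReal (ε / 4) := add_le_add A B
        _ = ENNReal.ofReal (ε / 2 + ε / 4) :=
            (ENNReal.ofReal_add (by positivity) (by positivity)).symm
        _ < ENNReal.ofReal ε := by
            rw [ENNReal.ofReal_lt_ofReal_iff hε]; linarith
    exact final
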